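/- Let K be a compact subset of A_− \ {x_−} and let T₀ > 0 be strictly larger than the supremum over s ∈ [0,1] and x ∈ K of the first exit time from K of the solution of φ̇ = b(s,φ) started at x. Then the minimal confined energy is strictly positive uniformly in s: m := inf_{s ∈ [0,1]} inf{ I^s_{0T₀}(φ) : φ ∈ C([0,T₀],ℝ^d), φ_t ∈ K for all t ∈ [0,T₀] } > 0. -/

import Mathlib

open MeasureTheory Set Filter Topology
open scoped RealInnerProductSpace ENNReal

/-- The frozen rate function `I^s_{0T}` on paths `[0,T] → ℝ^d`:
`(1/2)∫₀^T ‖φ̇_t − b(s,φ_t)‖² dt` if `φ` is absolutely continuous with `L²` derivative,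
and `+∞` otherwise. -/
noncomputable def frozenRate {d : ℕ}
    (b : ℝ → EuclideanSpace ℝ (Fin d) → EuclideanSpace ℝ (Fin d))
    (s T : ℝ) (φ : ℝ → EuclideanSpace ℝ (Fin d)) : ℝ≥0∞ :=
  ⨅ g ∈ {g : ℝ → EuclideanSpace ℝ (Fin d) |
      MemLp g 2 (volume.restrict (Ioc (0:ℝ) T)) ∧
      ∀ t ∈ Icc (0:ℝ) T, φ t = φ 0 + ∫ u in (0:ℝ)..t, g u},
    ∫⁻ t in Ioc (0:ℝ) T, ENNReal.ofReal ((1/2) * ‖g t - b s (φ t)‖^2)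

/-- The cost function `V^s(x,y,t)`. -/
noncomputable def costFn {d : ℕ}
    (b : ℝ → EuclideanSpace ℝ (Fin d) → EuclideanSpace ℝ (Fin d))
    (s : ℝ) (x y : EuclideanSpace ℝ (Fin d)) (t : ℝ) : ℝ≥0∞ :=
  ⨅ φ ∈ {φ : ℝ → EuclideanSpace ℝ (Fin d) |
      ContinuousOn φ (Icc (0:ℝ) t) ∧ φ 0 = x ∧ φ t = y},
    frozenRate b s t φ
/-- Helper: bound on `gronwallBound`. -/
lemma gronwallBound_le_aux {δ K ε x T : ℝ} (hδ : 0 ≤ δ) (hK : 0 ≤ K) (hε : 0 ≤ ε)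
    (hx0 : 0 ≤ x) (hxT : x ≤ T) :
    gronwallBound δ K ε x ≤ (δ + ε * T) * Real.exp (K * T) := by
  have hT : 0 ≤ T := hx0.trans hxT
  rcases eq_or_lt_of_le hK with hK0 | hKpos
  · rw [← hK0, gronwallBound_K0]
    show δ + ε * x ≤ _
    have h2 : ε * x ≤ ε * T := mul_le_mul_of_nonneg_left hxT hε
    simp only [zero_mul, Real.exp_zero, mul_one]
    linarith
  · rw [gronwallBound_of_K_ne_0 hKpos.ne']
    have he : Real.exp (K * x) ≤ Real.exp (K * T) :=
      Real.exp_le_exp.2 (by nlinarith)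
    have hepos : (0:ℝ) < Real.exp (K * T) := Real.exp_pos _
    have h2 : Real.exp (K * T) - 1 ≤ K * T * Real.exp (K * T) := by
      have := Real.add_one_le_exp (-(K * T))
      have h3 : Real.exp (-(K * T)) = (Real.exp (K * T))⁻¹ := by
        rw [Real.exp_neg]
      rw [h3] at this
      have h4 : (1 - K * T) * Real.exp (K * T) ≤ 1 := by
        rw [sub_mul, one_mul]
        have := mul_le_mul_of_nonneg_right this hepos.le
        rw [add_mul, inv_mul_cancel₀ hepos.ne'] at this
        linarith
      nlinarith
    have h5 : ε / K * (Real.exp (K * x) - 1) ≤ ε / K * (Real.exp (K * T) - 1) := by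
      apply mul_le_mul_of_nonneg_left (by linarith) (div_nonneg hε hK)
    have h6 : ε / K * (Real.exp (K * T) - 1) ≤ ε * T * Real.exp (K * T) := by
      calc ε / K * (Real.exp (K * T) - 1) ≤ ε / K * (K * T * Real.exp (K * T)) := by
            apply mul_le_mul_of_nonneg_left h2 (div_nonneg hε hK)
        _ = ε * T * Real.exp (K * T) := by
            field_simp
    have h7 : δ * Real.exp (K * x) ≤ δ * Real.exp (K * T) :=
      mul_le_mul_of_nonneg_left he hδ
    nlinarith [Real.exp_pos (K * x)]

/-- Helper: invariance of the ball `closedBall 0 R` under the flow of an inward-pointing field. -/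
lemma stay_in_ball {F : Type*} [NormedAddCommGroup F] [InnerProductSpace ℝ F]
    {v : F → F} {R : ℝ}
    (hinv : ∀ y : F, R ≤ ‖y‖ → ⟪y, v y⟫ ≤ 0)
    {f : ℝ → F} {t₀ t₁ : ℝ}
    (hf : ∀ t ∈ Icc t₀ t₁, HasDerivWithinAt f (v (f t)) (Icc t₀ t₁) t)
    (h0 : ‖f t₀‖ ≤ R) : ∀ t ∈ Icc t₀ t₁, ‖f t‖ ≤ R := by
  have hR : 0 ≤ R := (norm_nonneg _).trans h0
  have hcont : ContinuousOn f (Icc t₀ t₁) := fun t ht => (hf t ht).continuousWithinAt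
  by_contra hcon
  push_neg at hcon
  obtain ⟨t, ht, hgt⟩ := hcon
  have ht₀t : t₀ ≤ t := ht.1
  have htt₁ : t ≤ t₁ := ht.2
  set S : Set ℝ := {u | u ∈ Icc t₀ t ∧ ‖f u‖ ≤ R} with hS
  have hSclosed : IsClosed S := by
    have : S = Icc t₀ t ∩ ((fun u => ‖f u‖) ⁻¹' Iic R) := by
      ext u; simp only [hS, Set.mem_inter_iff, Set.mem_setOf_eq, Set.mem_preimage, Set.mem_Iic]
    rw [this]
    exact ContinuousOn.preimage_isClosed_of_isClosed
      ((hcont.mono (Icc_subset_Icc le_rfl htt₁)).norm) isClosed_Icc isClosed_Iic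
  have hScomp : IsCompact S :=
    (isCompact_Icc (a := t₀) (b := t)).of_isClosed_subset hSclosed (fun u hu => hu.1)
  have hSne : S.Nonempty := ⟨t₀, ⟨le_rfl, ht₀t⟩, h0⟩
  obtain ⟨σ, hσdef⟩ : ∃ σ : ℝ, σ = sSup S := ⟨_, rfl⟩
  have hσS : σ ∈ S := hσdef ▸ hScomp.sSup_mem hSne
  have hσIcc : σ ∈ Icc t₀ t := hσS.1
  have hσle : ‖f σ‖ ≤ R := hσS.2
  have hσt : σ < t :=
    lt_of_le_of_ne hσIcc.2 (fun h => absurd hσle (by rw [h]; exact not_le.2 hgt))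
  have hmid : ∀ u ∈ Ioc σ t, R < ‖f u‖ := by
    intro u hu
    by_contra hle
    push_neg at hle
    have huS : u ∈ S := ⟨⟨hσIcc.1.trans hu.1.le, hu.2⟩, hle⟩
    exact absurd (hσdef ▸ le_csSup hScomp.bddAbove huS) (not_le.2 hu.1)
  -- the squared norm is antitone on `[σ, t]`
  set Fn : ℝ → ℝ := fun u => ‖f u‖ ^ 2 with hFn
  have hFanti : AntitoneOn Fn (Icc σ t) := by
    apply antitoneOn_of_deriv_nonpos (convex_Icc σ t)
    · exact (hcont.mono (Icc_subset_Icc hσIcc.1 htt₁)).norm.pow 2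
    · intro u hu
      rw [interior_Icc] at hu
      have hu' : u ∈ Icc t₀ t₁ := ⟨hσIcc.1.trans hu.1.le, hu.2.le.trans htt₁⟩
      have hnh : Icc t₀ t₁ ∈ 𝓝 u :=
        Icc_mem_nhds (hσIcc.1.trans_lt hu.1) (hu.2.trans_le htt₁)
      have hd : HasDerivAt f (v (f u)) u := (hf u hu').hasDerivAt hnh
      have : HasDerivAt Fn (⟪f u, v (f u)⟫ + ⟪v (f u), f u⟫) u := by
        have h2 := hd.inner ℝ hd
        have : (fun t => ⟪f t, f t⟫) = Fn := by
          funext y; rw [real_inner_self_eq_norm_sq]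
        rwa [this] at h2
      exact this.differentiableAt.differentiableWithinAt
    · intro u hu
      rw [interior_Icc] at hu
      have hu' : u ∈ Icc t₀ t₁ := ⟨hσIcc.1.trans hu.1.le, hu.2.le.trans htt₁⟩
      have hnh : Icc t₀ t₁ ∈ 𝓝 u :=
        Icc_mem_nhds (hσIcc.1.trans_lt hu.1) (hu.2.trans_le htt₁)
      have hd : HasDerivAt f (v (f u)) u := (hf u hu').hasDerivAt hnh
      have hFd : HasDerivAt Fn (⟪f u, v (f u)⟫ + ⟪v (f u), f u⟫) u := by
        have h2 := hd.inner ℝ hd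
        have : (fun t => ⟪f t, f t⟫) = Fn := by
          funext y; rw [real_inner_self_eq_norm_sq]
        rwa [this] at h2
      rw [hFd.deriv]
      have hinner : ⟪f u, v (f u)⟫ ≤ 0 :=
        hinv (f u) (hmid u ⟨hu.1, hu.2.le⟩).le
      have hinner2 : ⟪v (f u), f u⟫ ≤ 0 := by
        rw [real_inner_comm]; exact hinner
      linarith
  have h1 : Fn t ≤ Fn σ := hFanti ⟨le_rfl, hσt.le⟩ ⟨hσt.le, le_rfl⟩ hσt.le
  have h2 : Fn σ ≤ R ^ 2 := by
    simpa [hFn] using pow_le_pow_left₀ (norm_nonneg _) hσle 2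
  have h3 : R ^ 2 < Fn t := by
    simpa [hFn] using pow_lt_pow_left₀ hgt hR (two_ne_zero)
  linarith

/-- One Picard–Lindelöf step staying in the invariant ball. -/
lemma pl_step {F : Type*} [NormedAddCommGroup F] [InnerProductSpace ℝ F] [CompleteSpace F]
    {v : F → F} {R L M : ℝ} (hL : 0 ≤ L)
    (hinv : ∀ y : F, R ≤ ‖y‖ → ⟪y, v y⟫ ≤ 0)
    (hLip : ∀ y₁ ∈ Metric.closedBall (0:F) (R+1), ∀ y₂ ∈ Metric.closedBall (0:F) (R+1),
      ‖v y₁ - v y₂‖ ≤ L * ‖y₁ - y₂‖)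
    (hbound : ∀ y ∈ Metric.closedBall (0:F) (R+1), ‖v y‖ ≤ M)
    {t₀ t₁ : ℝ} (h01 : t₀ ≤ t₁) (hMa : M * (t₁ - t₀) ≤ 1)
    (y : F) (hy : ‖y‖ ≤ R) :
    ∃ g : ℝ → F, g t₀ = y ∧ (∀ t ∈ Icc t₀ t₁, HasDerivWithinAt g (v (g t)) (Icc t₀ t₁) t) ∧
      ∀ t ∈ Icc t₀ t₁, ‖g t‖ ≤ R := by
  have hR : 0 ≤ R := (norm_nonneg _).trans hy
  have hsub : Metric.closedBall y 1 ⊆ Metric.closedBall (0:F) (R+1) := by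
    intro z hz
    rw [Metric.mem_closedBall] at hz ⊢
    have h5 : dist z 0 ≤ dist z y + dist y 0 := dist_triangle _ _ _
    rw [dist_zero_right, dist_zero_right] at h5
    rw [dist_zero_right]
    linarith [hy, hz]
  have hM : 0 ≤ M := (norm_nonneg _).trans (hbound y (hsub (Metric.mem_closedBall_self zero_le_one)))
  have hpl : IsPicardLindelof (fun _ z => v z) (tmin := t₀) (tmax := t₁) ⟨t₀, le_rfl, h01⟩ y 1 0
      M.toNNReal L.toNNReal := by
    apply IsPicardLindelof.of_time_independent
    · intro x hx
      rw [Real.coe_toNNReal _ hM]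
      exact hbound x (hsub (by simpa using hx))
    · apply LipschitzOnWith.of_dist_le_mul
      intro z₁ h₁ z₂ h₂
      rw [dist_eq_norm, dist_eq_norm, Real.coe_toNNReal _ hL]
      exact hLip z₁ (hsub (by simpa using h₁)) z₂ (hsub (by simpa using h₂))
    · show (M.toNNReal : ℝ) * max (t₁ - t₀) (t₀ - t₀) ≤ ((1:NNReal):ℝ) - ((0:NNReal):ℝ)
      rw [Real.coe_toNNReal _ hM, max_eq_left (by linarith : t₀ - t₀ ≤ t₁ - t₀)]
      simpa using hMa
  obtain ⟨g, hg0, hgd⟩ := hpl.exists_eq_forall_mem_Icc_hasDerivWithinAt₀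
  have hg0' : g t₀ = y := hg0
  refine ⟨g, hg0', hgd, ?_⟩
  exact stay_in_ball hinv hgd (by rw [hg0']; exact hy)

/-- Global forward solutions of `ẏ = v(y)` exist, staying in the invariant ball. -/
lemma exists_global_solution {F : Type*} [NormedAddCommGroup F] [InnerProductSpace ℝ F]
    [CompleteSpace F]
    {v : F → F} {R L M : ℝ} (hL : 0 ≤ L) (hM : 0 ≤ M)
    (hinv : ∀ y : F, R ≤ ‖y‖ → ⟪y, v y⟫ ≤ 0)
    (hLip : ∀ y₁ ∈ Metric.closedBall (0:F) (R+1), ∀ y₂ ∈ Metric.closedBall (0:F) (R+1),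
      ‖v y₁ - v y₂‖ ≤ L * ‖y₁ - y₂‖)
    (hbound : ∀ y ∈ Metric.closedBall (0:F) (R+1), ‖v y‖ ≤ M)
    (x : F) (hx : ‖x‖ ≤ R) :
    ∃ ψ : ℝ → F, ψ 0 = x ∧ (∀ t ∈ Ici (0:ℝ), HasDerivWithinAt ψ (v (ψ t)) (Ici (0:ℝ)) t) ∧
      ∀ t ∈ Ici (0:ℝ), ‖ψ t‖ ≤ R := by
  have hR : 0 ≤ R := (norm_nonneg _).trans hx
  set a : ℝ := 1 / (M + 1) with ha_def
  have haM : 0 < M + 1 := by linarith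
  have ha : 0 < a := by positivity
  have hMa : ∀ t₀ : ℝ, M * ((t₀ + a) - t₀) ≤ 1 := by
    intro t₀
    rw [add_sub_cancel_left, ha_def]
    rw [mul_one_div, div_le_one haM]
    linarith
  -- solutions on `[0, (n+1) * a]`
  have P : ∀ n : ℕ, ∃ f : ℝ → F, f 0 = x ∧
      (∀ t ∈ Icc 0 ((n+1) * a), HasDerivWithinAt f (v (f t)) (Icc 0 ((n+1) * a)) t) ∧
      ∀ t ∈ Icc 0 ((n+1) * a), ‖f t‖ ≤ R := by
    intro n
    induction n with
    | zero =>
      obtain ⟨g, hg0, hgd, hgb⟩ := pl_step hL hinv hLip hbound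
        (by linarith : (0:ℝ) ≤ 0 + a) (by simpa using hMa 0) x hx
      refine ⟨g, hg0, ?_, ?_⟩
      · simpa using hgd
      · simpa using hgb
    | succ n ih =>
      obtain ⟨f, hf0, hfd, hfb⟩ := ih
      set T : ℝ := (n+1) * a with hT_def
      have hT : 0 ≤ T := by positivity
      have hTT : T ≤ T + a := by linarith
      obtain ⟨g, hg0, hgd, hgb⟩ := pl_step hL hinv hLip hbound hTT (hMa T)
        (f T) (hfb T ⟨hT, le_rfl⟩)
      have hTT' : (((n+1 : ℕ):ℝ)+1) * a = T + a := by rw [hT_def]; push_cast; ring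
      refine ⟨fun t => if t ≤ T then f t else g t, ?_, ?_, ?_⟩
      · simp only [if_pos hT]; exact hf0
      · intro t ht
        rw [hTT'] at ht ⊢
        have hicc : Icc (0:ℝ) T ∪ Icc T (T + a) = Icc 0 (T + a) :=
          Icc_union_Icc_eq_Icc hT hTT
        rcases lt_trichotomy t T with hlt | heq | hgt
        · have hmem : Icc (0:ℝ) T ∈ 𝓝[Icc (0:ℝ) (T+a)] t := by
            rw [mem_nhdsWithin]
            exact ⟨Iio T, isOpen_Iio, hlt, fun u hu => ⟨hu.2.1, hu.1.le⟩⟩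
          have hder := (hfd t ⟨ht.1, hlt.le⟩).mono_of_mem_nhdsWithin hmem
          have heq' : (fun u => if u ≤ T then f u else g u) =ᶠ[𝓝[Icc (0:ℝ) (T+a)] t]
              f := by
            filter_upwards [nhdsWithin_le_nhds (Iio_mem_nhds hlt)] with u hu
            exact if_pos (le_of_lt hu)
          have := hder.congr_of_eventuallyEq heq' (if_pos hlt.le)
          simpa [if_pos hlt.le] using this
        · have hl : HasDerivWithinAt (fun u => if u ≤ T then f u else g u)
              (v (if t ≤ T then f t else g t)) (Icc 0 T) t := by
            rw [if_pos heq.le]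
            exact (hfd t ⟨ht.1, heq.le⟩).congr (fun u hu => if_pos hu.2) (if_pos heq.le)
          have hmemT : t ∈ Icc T (T + a) := ⟨heq.ge, by rw [heq]; linarith⟩
          have hval : ∀ u ∈ Icc T (T+a), (if u ≤ T then f u else g u) = g u := by
            intro u hu
            rcases le_or_gt u T with h | h
            · have hu' : u = T := le_antisymm h hu.1
              rw [if_pos h, hu', hg0]
            · exact if_neg (not_le.2 h)
          have hr : HasDerivWithinAt (fun u => if u ≤ T then f u else g u)
              (v (if t ≤ T then f t else g t)) (Icc T (T+a)) t := by
            rw [if_pos heq.le]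
            have hfg : g t = f t := by rw [heq]; exact hg0
            rw [← hfg]
            exact (hgd t hmemT).congr hval (hval t hmemT)
          have h3 := hl.union hr
          rw [hicc] at h3
          exact h3
        · have hmem : Icc T (T+a) ∈ 𝓝[Icc (0:ℝ) (T+a)] t := by
            rw [mem_nhdsWithin]
            exact ⟨Ioi T, isOpen_Ioi, hgt, fun u hu => ⟨hu.1.le, hu.2.2⟩⟩
          have hder := (hgd t ⟨hgt.le, ht.2⟩).mono_of_mem_nhdsWithin hmem
          have heq' : (fun u => if u ≤ T then f u else g u) =ᶠ[𝓝[Icc (0:ℝ) (T+a)] t]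
              g := by
            filter_upwards [nhdsWithin_le_nhds (Ioi_mem_nhds hgt)] with u hu
            exact if_neg (not_le.2 hu)
          have := hder.congr_of_eventuallyEq heq' (if_neg (not_le.2 hgt))
          simpa [if_neg (not_le.2 hgt)] using this
      · intro t ht
        rw [hTT'] at ht
        show ‖if t ≤ T then f t else g t‖ ≤ R
        rcases le_or_gt t T with h | h
        · rw [if_pos h]; exact hfb t ⟨ht.1, h⟩
        · rw [if_neg (not_le.2 h)]; exact hgb t ⟨h.le, ht.2⟩
  choose Fn hFn0 hFnd hFnb using P
  -- uniqueness of solutions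
  have hLipR : ∀ t : ℝ, LipschitzOnWith L.toNNReal v (Metric.closedBall (0:F) R) := by
    intro t
    apply LipschitzOnWith.of_dist_le_mul
    intro z₁ h₁ z₂ h₂
    have hsub : Metric.closedBall (0:F) R ⊆ Metric.closedBall (0:F) (R+1) :=
      Metric.closedBall_subset_closedBall (by linarith)
    rw [dist_eq_norm, dist_eq_norm, Real.coe_toNNReal _ hL]
    exact hLip z₁ (hsub h₁) z₂ (hsub h₂)
  have huniq : ∀ m n : ℕ, ∀ t ∈ Icc (0:ℝ) (((min m n : ℕ) + 1) * a), Fn m t = Fn n t := by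
    intro m n t ht
    have hmono : ∀ k : ℕ, (min m n : ℕ) ≤ k → ((min m n : ℕ) + 1) * a ≤ ((k:ℝ)+1) * a := by
      intro k hk
      have : ((min m n : ℕ):ℝ) ≤ (k:ℝ) := by exact_mod_cast hk
      nlinarith
    set N : ℝ := ((min m n : ℕ) + 1) * a with hN
    have hN0 : 0 ≤ N := by positivity
    have key : ∀ k : ℕ, (min m n : ℕ) ≤ k → ∀ u ∈ Ico (0:ℝ) N,
        HasDerivWithinAt (Fn k) (v (Fn k u)) (Ici u) u := by
      intro k hk u hu
      have hmem : Icc (0:ℝ) ((k+1)*a) ∈ 𝓝[Ici u] u := by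
        rw [mem_nhdsWithin]
        refine ⟨Iio (((k:ℝ)+1)*a), isOpen_Iio, lt_of_lt_of_le hu.2 (hmono k hk), ?_⟩
        exact fun z hz => ⟨hu.1.trans hz.2, hz.1.le⟩
      exact (hFnd k u ⟨hu.1, (hu.2.le.trans (hmono k hk))⟩).mono_of_mem_nhdsWithin hmem
    have hcont : ∀ k : ℕ, (min m n : ℕ) ≤ k → ContinuousOn (Fn k) (Icc 0 N) := by
      intro k hk u hu
      exact ((hFnd k u ⟨hu.1, hu.2.trans (hmono k hk)⟩).continuousWithinAt).mono
        (Icc_subset_Icc le_rfl (hmono k hk))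
    have hball : ∀ k : ℕ, (min m n : ℕ) ≤ k → ∀ u ∈ Ico (0:ℝ) N,
        Fn k u ∈ Metric.closedBall (0:F) R := by
      intro k hk u hu
      rw [Metric.mem_closedBall, dist_zero_right]
      exact hFnb k u ⟨hu.1, hu.2.le.trans (hmono k hk)⟩
    have := ODE_solution_unique_of_mem_Icc_right (v := fun _ z => v z)
      (s := fun _ => Metric.closedBall (0:F) R) (fun _ _ => hLipR 0)
      (hcont m (min_le_left m n)) (key m (min_le_left m n)) (hball m (min_le_left m n))
      (hcont n (min_le_right m n)) (key n (min_le_right m n)) (hball n (min_le_right m n))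
      (by rw [hFn0, hFn0])
    exact this ht
  -- define the global solution
  set ψ : ℝ → F := fun t => if 0 ≤ t then Fn (⌊t/a⌋.toNat + 2) t else x with hψ_def
  have hlt : ∀ t : ℝ, 0 ≤ t → t < ((⌊t/a⌋.toNat + 2 : ℕ) : ℝ) * a := by
    intro t ht
    have h2 : (0:ℤ) ≤ ⌊t/a⌋ := Int.floor_nonneg.2 (by positivity)
    have h3 : ((⌊t/a⌋.toNat : ℕ) : ℝ) = ((⌊t/a⌋ : ℤ) : ℝ) := by
      exact_mod_cast congrArg (Int.cast : ℤ → ℝ) (Int.toNat_of_nonneg h2)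
    have h4 : t < ((⌊t/a⌋ : ℝ) + 1) * a := by
      have h1 : t / a < (⌊t/a⌋ : ℝ) + 1 := Int.lt_floor_add_one _
      have h6 : t / a * a < ((⌊t/a⌋:ℝ)+1) * a := mul_lt_mul_of_pos_right h1 ha
      rwa [div_mul_cancel₀ _ ha.ne'] at h6
    have h5 : ((⌊t/a⌋.toNat + 2 : ℕ):ℝ) = ((⌊t/a⌋:ℝ) + 2) := by
      push_cast
      rw [h3]
    rw [h5]
    nlinarith
  have hstep : ∀ k : ℕ, ((k:ℕ):ℝ) * a ≤ (((k:ℕ):ℝ) + 1) * a := by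
    intro k; nlinarith [ha.le, (Nat.cast_nonneg k : (0:ℝ) ≤ (k:ℝ))]
  have hkey : ∀ t : ℝ, 0 ≤ t → ∀ m : ℕ, t ≤ ((m:ℝ)+1) * a → ψ t = Fn m t := by
    intro t ht m hm
    show (if 0 ≤ t then Fn (⌊t/a⌋.toNat + 2) t else x) = Fn m t
    rw [if_pos ht]
    have h1 : t < ((⌊t/a⌋.toNat + 2 : ℕ):ℝ) * a := hlt t ht
    rcases le_total (⌊t/a⌋.toNat + 2) m with h | h
    · apply huniq
      rw [min_eq_left h]
      exact ⟨ht, h1.le.trans (hstep _)⟩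
    · apply huniq
      rw [min_eq_right h]
      exact ⟨ht, hm⟩
  refine ⟨ψ, ?_, ?_, ?_⟩
  · have h0 : ψ 0 = Fn 0 0 := hkey 0 le_rfl 0 (by positivity)
    rw [h0, hFn0]
  · intro t ht
    set k : ℕ := ⌊t/a⌋.toNat + 2 with hk_def
    have htm : t < (k:ℝ) * a := hlt t ht
    have htk : t < ((k:ℝ)+1) * a := htm.trans_le (hstep k)
    have htm' : t ∈ Icc 0 (((k:ℝ)+1) * a) := ⟨ht, htk.le⟩
    have hder := hFnd k t htm'
    have hmem : Icc (0:ℝ) (((k:ℝ)+1)*a) ∈ 𝓝[Ici (0:ℝ)] t := by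
      rw [mem_nhdsWithin]
      exact ⟨Iio (((k:ℝ)+1)*a), isOpen_Iio, htk, fun z hz => ⟨hz.2, hz.1.le⟩⟩
    have hder2 := hder.mono_of_mem_nhdsWithin hmem
    have heq' : ψ =ᶠ[𝓝[Ici (0:ℝ)] t] Fn k := by
      have hmem2 : (Ici (0:ℝ) ∩ Iio (((k:ℝ)+1)*a)) ∈ 𝓝[Ici (0:ℝ)] t :=
        inter_mem self_mem_nhdsWithin (nhdsWithin_le_nhds (Iio_mem_nhds htk))
      filter_upwards [hmem2] with u hu
      exact hkey u hu.1 k hu.2.le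
    have hψt : ψ t = Fn k t := hkey t ht k htk.le
    have hfinal := hder2.congr_of_eventuallyEq heq' hψt
    rwa [hψt]
  · intro t ht
    have htm : t < ((⌊t/a⌋.toNat + 2 : ℕ):ℝ) * a := hlt t ht
    rw [hkey t ht _ (htm.le.trans (hstep _))]
    exact hFnb _ t ⟨ht, htm.le.trans (hstep _)⟩

/-- if every deterministic solution started in the compact set
`K ⊆ A_− \ {x_−}` exits `K` before time `T₀`, then the minimal energy of paths
confined to `K` up to time `T₀` is strictly positive, uniformly in `s ∈ [0,1]`. -/
theorem confined_minimal_energy_positive {d : ℕ} (hd : 1 ≤ d)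
    (b : ℝ → EuclideanSpace ℝ (Fin d) → EuclideanSpace ℝ (Fin d))
    (hper : ∀ t ≥ (0:ℝ), ∀ x, b (t + 1) x = b t x)
    (hLipX : ∀ R > (0:ℝ), ∀ x : EuclideanSpace ℝ (Fin d), ∃ K ≥ (0:ℝ),
      ∀ t ≥ (0:ℝ), ∀ y₁ ∈ Metric.closedBall x R, ∀ y₂ ∈ Metric.closedBall x R,
        ‖b t y₁ - b t y₂‖ ≤ K * ‖y₁ - y₂‖)
    (hLipT : ∀ R > (0:ℝ), ∀ x : EuclideanSpace ℝ (Fin d), ∃ κ ≥ (0:ℝ),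
      ∀ s ≥ (0:ℝ), ∀ t ≥ (0:ℝ), ∀ y ∈ Metric.closedBall x R,
        ‖b t y - b s y‖ ≤ κ * |t - s|)
    (hgrow : ∃ η > (0:ℝ), ∃ R₀ > (0:ℝ), ∀ t ≥ (0:ℝ),
      ∀ x : EuclideanSpace ℝ (Fin d), R₀ ≤ ‖x‖ → ⟪x, b t x⟫ < -η * ‖x‖)
    (xm xp : EuclideanSpace ℝ (Fin d)) (Am Ap : Set (EuclideanSpace ℝ (Fin d)))
    (heqm : ∀ s ≥ (0:ℝ), b s xm = 0) (heqp : ∀ s ≥ (0:ℝ), b s xp = 0)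
    (hAm : ∀ s ≥ (0:ℝ), Am = {y | ∀ φ : ℝ → EuclideanSpace ℝ (Fin d),
        (∀ t ∈ Ici (0:ℝ), HasDerivWithinAt φ (b s (φ t)) (Ici (0:ℝ)) t) → φ 0 = y →
        Tendsto φ atTop (𝓝 xm)})
    (hAp : ∀ s ≥ (0:ℝ), Ap = {y | ∀ φ : ℝ → EuclideanSpace ℝ (Fin d),
        (∀ t ∈ Ici (0:ℝ), HasDerivWithinAt φ (b s (φ t)) (Ici (0:ℝ)) t) → φ 0 = y →
        Tendsto φ atTop (𝓝 xp)})
    (hxm : xm ∈ Am) (hxp : xp ∈ Ap)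
    (hcl : closure (Am ∪ Ap) = univ)
    (hbd : frontier Am = frontier Ap)
    (K : Set (EuclideanSpace ℝ (Fin d))) (hKc : IsCompact K) (hK : K ⊆ Am \ {xm})
    (T₀ : ℝ) (hT₀pos : 0 < T₀)
    (hT₀ : ∀ s ∈ Icc (0:ℝ) 1, ∀ x ∈ K, ∀ φ : ℝ → EuclideanSpace ℝ (Fin d),
      φ 0 = x → (∀ t ∈ Ici (0:ℝ), HasDerivWithinAt φ (b s (φ t)) (Ici (0:ℝ)) t) →
      ∃ t, 0 ≤ t ∧ t < T₀ ∧ φ t ∉ K) :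
    0 < ⨅ s ∈ Icc (0:ℝ) 1,
        ⨅ φ ∈ {φ : ℝ → EuclideanSpace ℝ (Fin d) |
            ContinuousOn φ (Icc (0:ℝ) T₀) ∧ ∀ t ∈ Icc (0:ℝ) T₀, φ t ∈ K},
          frozenRate b s T₀ φ := by
  classical
  rcases K.eq_empty_or_nonempty with hKe | hKne
  · refine lt_of_lt_of_le (by simp : (0:ℝ≥0∞) < ⊤) ?_
    refine le_iInf₂ fun s hs => le_iInf₂ fun φ hφ => ?_
    exact absurd (hφ.2 0 ⟨le_rfl, hT₀pos.le⟩) (by simp [hKe])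
  obtain ⟨η, hη, R₀, hR₀, hgr⟩ := hgrow
  obtain ⟨RK, hRK⟩ := hKc.isBounded.subset_closedBall 0
  set R : ℝ := max R₀ RK with hR_def
  have hRpos : 0 < R := lt_of_lt_of_le hR₀ (le_max_left _ _)
  have hKball : K ⊆ Metric.closedBall 0 R :=
    hRK.trans (Metric.closedBall_subset_closedBall (le_max_right _ _))
  have hKball' : ∀ y ∈ K, ‖y‖ ≤ R := by
    intro y hy
    have := hKball hy
    rwa [Metric.mem_closedBall, dist_zero_right] at this
  have hinv : ∀ s : ℝ, 0 ≤ s → ∀ y : EuclideanSpace ℝ (Fin d), R ≤ ‖y‖ → ⟪y, b s y⟫ ≤ 0 := by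
    intro s hs y hy
    have h1 := hgr s hs y (le_trans (le_max_left _ _) hy)
    nlinarith [norm_nonneg y]
  obtain ⟨L, hL0, hLip⟩ := hLipX (R+1) (by linarith) 0
  obtain ⟨κ, hκ0, hκ⟩ := hLipT (R+1) (by linarith) 0
  set M : ℝ := L * (R+1) + κ + ‖b 0 0‖ with hM_def
  have hM0 : 0 ≤ M := by positivity
  have hball_sub : Metric.closedBall (0:EuclideanSpace ℝ (Fin d)) R ⊆
      Metric.closedBall 0 (R+1) := Metric.closedBall_subset_closedBall (by linarith)
  have h0mem : (0:EuclideanSpace ℝ (Fin d)) ∈ Metric.closedBall (0:EuclideanSpace ℝ (Fin d)) (R+1) :=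
    Metric.mem_closedBall_self (by linarith)
  have hMb : ∀ s ∈ Icc (0:ℝ) 1, ∀ y ∈ Metric.closedBall (0:EuclideanSpace ℝ (Fin d)) (R+1),
      ‖b s y‖ ≤ M := by
    intro s hs y hy
    have h1 : ‖b s y - b s 0‖ ≤ L * ‖y - 0‖ := hLip s hs.1 y hy 0 h0mem
    have h2 : ‖b s 0 - b 0 0‖ ≤ κ * |s - 0| := hκ 0 le_rfl s hs.1 0 h0mem
    have h3 : ‖y - 0‖ ≤ R + 1 := by
      rw [sub_zero, ← dist_zero_right]
      exact Metric.mem_closedBall.1 hy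
    have h4 : |s - 0| ≤ 1 := by
      rw [sub_zero, abs_of_nonneg hs.1]; exact hs.2
    have h5 : ‖b s y‖ ≤ ‖b s y - b s 0‖ + ‖b s 0 - b 0 0‖ + ‖b 0 0‖ := by
      have := norm_add₃_le (a := b s y - b s 0) (b := b s 0 - b 0 0) (c := b 0 0)
      simpa using this
    have h6 : L * ‖y - 0‖ ≤ L * (R+1) := mul_le_mul_of_nonneg_left h3 hL0
    have h7 : κ * |s - 0| ≤ κ * 1 := mul_le_mul_of_nonneg_left h4 hκ0
    rw [hM_def]; linarith
  -- canonical global solutions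
  have hsol : ∀ p : ℝ × EuclideanSpace ℝ (Fin d), ∃ ψ : ℝ → EuclideanSpace ℝ (Fin d),
      p ∈ Icc (0:ℝ) 1 ×ˢ K →
      (ψ 0 = p.2 ∧ (∀ t ∈ Ici (0:ℝ), HasDerivWithinAt ψ (b p.1 (ψ t)) (Ici (0:ℝ)) t) ∧
        ∀ t ∈ Ici (0:ℝ), ‖ψ t‖ ≤ R) := by
    intro p
    by_cases hp : p ∈ Icc (0:ℝ) 1 ×ˢ K
    · have hp1 : p.1 ∈ Icc (0:ℝ) 1 := hp.1
      obtain ⟨ψ, h1, h2, h3⟩ := exists_global_solution (v := fun y => b p.1 y) hL0 hM0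
        (hinv p.1 hp1.1) (fun y₁ h₁ y₂ h₂ => hLip p.1 hp1.1 y₁ h₁ y₂ h₂)
        (fun y hy => hMb p.1 hp1 y hy) p.2 (hKball' p.2 hp.2)
      exact ⟨ψ, fun _ => ⟨h1, h2, h3⟩⟩
    · exact ⟨fun _ => 0, fun h => absurd h hp⟩
  choose Ψ hΨ using hsol
  set S : Set (ℝ × EuclideanSpace ℝ (Fin d)) := Icc (0:ℝ) 1 ×ˢ K with hS_def
  have hScomp : IsCompact S := isCompact_Icc.prod hKc
  have hLipR : LipschitzOnWith L.toNNReal (fun y => b 0 y)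
      (Metric.closedBall (0:EuclideanSpace ℝ (Fin d)) R) := by
    apply LipschitzOnWith.of_dist_le_mul
    intro z₁ h₁ z₂ h₂
    rw [dist_eq_norm, dist_eq_norm, Real.coe_toNNReal _ hL0]
    exact hLip 0 le_rfl z₁ (hball_sub h₁) z₂ (hball_sub h₂)
  -- uniform exit margin
  have hclaim : ∀ p : ℝ × EuclideanSpace ℝ (Fin d), ∃ DU : ℝ × Set (ℝ × EuclideanSpace ℝ (Fin d)),
      p ∈ S → (0 < DU.1 ∧ DU.2 ∈ 𝓝 p ∧
        ∀ q ∈ S ∩ DU.2, ∃ t ∈ Icc (0:ℝ) T₀, DU.1 ≤ Metric.infDist (Ψ q t) K) := by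
    intro p
    by_cases hp : p ∈ S
    · obtain ⟨hψ0, hψd, hψb⟩ := hΨ p hp
      obtain ⟨t₁, ht₁0, ht₁T, hout⟩ := hT₀ p.1 hp.1 p.2 hp.2 (Ψ p) hψ0 hψd
      have hd : 0 < Metric.infDist (Ψ p t₁) K :=
        (hKc.isClosed.notMem_iff_infDist_pos hKne).1 hout
      set dp := Metric.infDist (Ψ p t₁) K with hdp_def
      set c : ℝ := (1 + κ * T₀) * Real.exp (L * T₀) with hc_def
      have hcpos : 0 < c := by positivity
      set r : ℝ := dp / (2 * (c + 1)) with hr_def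
      have hrpos : 0 < r := by positivity
      refine ⟨(dp/2, Metric.ball p.1 r ×ˢ Metric.ball p.2 r), fun _ => ⟨by positivity,
        prod_mem_nhds (Metric.ball_mem_nhds _ hrpos) (Metric.ball_mem_nhds _ hrpos), ?_⟩⟩
      intro q hq
      obtain ⟨hq0, hqd, hqb⟩ := hΨ q hq.1
      have hq1 : 0 ≤ q.1 := hq.1.1.1
      have hps : 0 ≤ p.1 := hp.1.1
      have hqdist : |q.1 - p.1| ≤ r := by
        have := hq.2.1
        rw [Metric.mem_ball, Real.dist_eq] at this
        exact this.le
      have hLipP : ∀ u : ℝ, LipschitzOnWith L.toNNReal (fun y => b p.1 y)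
          (Metric.closedBall (0:EuclideanSpace ℝ (Fin d)) R) := by
        intro u
        apply LipschitzOnWith.of_dist_le_mul
        intro z₁ h₁ z₂ h₂
        rw [dist_eq_norm, dist_eq_norm, Real.coe_toNNReal _ hL0]
        exact hLip p.1 hps z₁ (hball_sub h₁) z₂ (hball_sub h₂)
      have hcompare : ∀ t ∈ Icc (0:ℝ) T₀, dist (Ψ p t) (Ψ q t) ≤
          gronwallBound r L.toNNReal (0 + κ * r) (t - 0) := by
        apply dist_le_of_approx_trajectories_ODE_of_mem (v := fun _ y => b p.1 y)
          (s := fun _ => Metric.closedBall (0:EuclideanSpace ℝ (Fin d)) R)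
          (f' := fun t => b p.1 (Ψ p t)) (g' := fun t => b q.1 (Ψ q t)) (fun t _ => hLipP t)
        · exact fun u hu => ((hψd u hu.1).continuousWithinAt).mono (fun z hz => hz.1)
        · exact fun t ht => (hψd t ht.1).mono (Ici_subset_Ici.2 ht.1)
        · intro t ht; rw [dist_self]
        · intro t ht
          rw [Metric.mem_closedBall, dist_zero_right]
          exact hψb t ht.1
        · exact fun u hu => ((hqd u hu.1).continuousWithinAt).mono (fun z hz => hz.1)
        · exact fun t ht => (hqd t ht.1).mono (Ici_subset_Ici.2 ht.1)
        · intro t ht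
          rw [dist_eq_norm]
          have h1 : Ψ q t ∈ Metric.closedBall (0:EuclideanSpace ℝ (Fin d)) (R+1) := by
            apply hball_sub
            rw [Metric.mem_closedBall, dist_zero_right]
            exact hqb t ht.1
          have h2 := hκ p.1 hps q.1 hq1 (Ψ q t) h1
          exact h2.trans (mul_le_mul_of_nonneg_left hqdist hκ0)
        · intro t ht
          rw [Metric.mem_closedBall, dist_zero_right]
          exact hqb t ht.1
        · rw [hψ0, hq0]
          have := hq.2.2
          rw [Metric.mem_ball] at this
          rw [dist_comm]
          exact this.le
      refine ⟨t₁, ⟨ht₁0, ht₁T.le⟩, ?_⟩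
      have h1 : dp ≤ Metric.infDist (Ψ q t₁) K + dist (Ψ p t₁) (Ψ q t₁) :=
        Metric.infDist_le_infDist_add_dist
      have h2 : dist (Ψ p t₁) (Ψ q t₁) ≤ dp / 2 := by
        have h3 := hcompare t₁ ⟨ht₁0, ht₁T.le⟩
        rw [Real.coe_toNNReal L hL0] at h3
        have h4 : gronwallBound r L (0 + κ * r) (t₁ - 0) ≤
            (r + (0 + κ * r) * T₀) * Real.exp (L * T₀) := by
          apply gronwallBound_le_aux hrpos.le hL0 (by positivity)
            (by rw [sub_zero]; exact ht₁0) (by rw [sub_zero]; exact ht₁T.le)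
        have h5 : (r + (0 + κ * r) * T₀) * Real.exp (L * T₀) = r * c := by
          rw [hc_def]; ring
        have h6 : r * c ≤ dp / 2 := by
          rw [hr_def]
          rw [div_mul_eq_mul_div, div_le_div_iff₀ (by positivity) (by norm_num)]
          nlinarith
        have := h3.trans (h4.trans_eq h5)
        linarith
      linarith
    · exact ⟨(1, univ), fun h => absurd h hp⟩
  choose DU hDU using hclaim
  obtain ⟨Fs, hFsS, hFscover⟩ := hScomp.elim_nhds_subcover (fun p => (DU p).2)
    (fun p hp => (hDU p hp).2.1)
  have hSne : S.Nonempty := ⟨(0, hKne.some), ⟨⟨le_rfl, zero_le_one⟩, hKne.some_mem⟩⟩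
  have hFsne : Fs.Nonempty := by
    obtain ⟨q, hq⟩ := hSne
    have h1 := hFscover hq
    simp only [Set.mem_iUnion] at h1
    obtain ⟨p, hpF, _⟩ := h1
    exact ⟨p, hpF⟩
  set δ : ℝ := Fs.inf' hFsne (fun p => (DU p).1) with hδ_def
  have hδpos : 0 < δ := by
    rw [hδ_def, Finset.lt_inf'_iff]
    intro p hpF
    exact (hDU p (hFsS p hpF)).1
  have hmargin : ∀ q ∈ S, ∃ t ∈ Icc (0:ℝ) T₀, δ ≤ Metric.infDist (Ψ q t) K := by
    intro q hq
    have h1 := hFscover hq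
    simp only [Set.mem_iUnion] at h1
    obtain ⟨p, hpF, hqU⟩ := h1
    obtain ⟨t, htI, hle⟩ := (hDU p (hFsS p hpF)).2.2 q ⟨hq, hqU⟩
    exact ⟨t, htI, le_trans (Finset.inf'_le _ hpF) hle⟩
  -- core estimate
  set Cg : ℝ := 1 + L * T₀ * Real.exp (L * T₀) with hCg_def
  have hCgpos : 0 < Cg := by positivity
  have hcore : ∀ s ∈ Icc (0:ℝ) 1, ∀ φ ∈ {φ : ℝ → EuclideanSpace ℝ (Fin d) |
      ContinuousOn φ (Icc (0:ℝ) T₀) ∧ ∀ t ∈ Icc (0:ℝ) T₀, φ t ∈ K},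
      ENNReal.ofReal ((δ/Cg)^2) / (2 * ENNReal.ofReal T₀) ≤ frozenRate b s T₀ φ := by
    intro s hs φ hφ
    obtain ⟨hφc, hφK⟩ := hφ
    rw [frozenRate]
    refine le_iInf₂ fun g hg => ?_
    obtain ⟨hgL2, hgrep⟩ := hg
    have hs0 : (0:ℝ) ≤ s := hs.1
    have hqS : ((s, φ 0) : ℝ × EuclideanSpace ℝ (Fin d)) ∈ S := ⟨hs, hφK 0 ⟨le_rfl, hT₀pos.le⟩⟩
    obtain ⟨hψ0, hψd, hψb⟩ := hΨ (s, φ 0) hqS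
    obtain ⟨t₁, ht₁, hmar⟩ := hmargin (s, φ 0) hqS
    set ψ : ℝ → EuclideanSpace ℝ (Fin d) := Ψ (s, φ 0) with hψ_def
    have hψ0' : ψ 0 = φ 0 := hψ0
    have hbscont : Continuous (b s) := by
      rw [continuous_iff_continuousAt]
      intro y
      obtain ⟨L2, hL20, hLip2⟩ := hLipX 1 one_pos y
      have hl : LipschitzOnWith L2.toNNReal (b s) (Metric.closedBall y 1) := by
        apply LipschitzOnWith.of_dist_le_mul
        intro z₁ h₁ z₂ h₂
        rw [dist_eq_norm, dist_eq_norm, Real.coe_toNNReal _ hL20]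
        exact hLip2 s hs0 z₁ h₁ z₂ h₂
      exact hl.continuousOn.continuousAt (Metric.closedBall_mem_nhds y one_pos)
    have hψcont : ContinuousOn ψ (Icc 0 T₀) := fun u hu =>
      ((hψd u hu.1).continuousWithinAt).mono (fun z hz => hz.1)
    haveI hfin : IsFiniteMeasure (volume.restrict (Ioc (0:ℝ) T₀)) :=
      ⟨by rw [Measure.restrict_apply_univ]; exact measure_Ioc_lt_top⟩
    set h : ℝ → EuclideanSpace ℝ (Fin d) := fun u => g u - b s (φ u) with hh_def
    have hbφc : ContinuousOn (fun u => b s (φ u)) (Icc 0 T₀) := hbscont.comp_continuousOn hφc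
    have hbφint : IntegrableOn (fun u => b s (φ u)) (Ioc 0 T₀) :=
      (hbφc.integrableOn_compact isCompact_Icc).mono_set Ioc_subset_Icc_self
    have hgint : IntegrableOn g (Ioc 0 T₀) := hgL2.integrable one_le_two
    have hhint : IntegrableOn h (Ioc 0 T₀) := hgint.sub hbφint
    set A : ℝ := ∫ u in Ioc (0:ℝ) T₀, ‖h u‖ with hA_def
    have hA0 : 0 ≤ A := setIntegral_nonneg measurableSet_Ioc (fun u _ => norm_nonneg _)
    have hgiv : ∀ t ∈ Icc (0:ℝ) T₀, IntervalIntegrable g volume 0 t := fun t htI =>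
      (intervalIntegrable_iff_integrableOn_Ioc_of_le htI.1).2
        (hgint.mono_set (Ioc_subset_Ioc le_rfl htI.2))
    have hbψiv : ∀ t ∈ Icc (0:ℝ) T₀, IntervalIntegrable (fun u => b s (ψ u)) volume 0 t := by
      intro t htI
      apply ContinuousOn.intervalIntegrable
      apply hbscont.comp_continuousOn
      apply hψcont.mono
      rw [uIcc_of_le htI.1]
      exact Icc_subset_Icc le_rfl htI.2
    have hψrep : ∀ t ∈ Icc (0:ℝ) T₀, ψ t = ψ 0 + ∫ u in (0:ℝ)..t, b s (ψ u) := by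
      intro t htI
      have h1 := intervalIntegral.integral_eq_sub_of_hasDeriv_right_of_le htI.1
        (hψcont.mono (Icc_subset_Icc le_rfl htI.2))
        (fun u hu => (hψd u hu.1.le).mono (fun z hz => (hu.1.trans hz).le))
        (hbψiv t htI)
      rw [h1]
      abel
    have hucont : ContinuousOn (fun u => ‖φ u - ψ u‖) (Icc 0 T₀) := (hφc.sub hψcont).norm
    set w : ℝ → ℝ := fun t => ∫ u in (0:ℝ)..t, ‖φ u - ψ u‖ with hw_def
    have huiv : ∀ t ∈ Icc (0:ℝ) T₀, IntervalIntegrable (fun u => ‖φ u - ψ u‖) volume 0 t := by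
      intro t htI
      apply ContinuousOn.intervalIntegrable
      apply hucont.mono
      rw [uIcc_of_le htI.1]
      exact Icc_subset_Icc le_rfl htI.2
    have hw0 : ∀ t ∈ Icc (0:ℝ) T₀, 0 ≤ w t := fun t htI =>
      intervalIntegral.integral_nonneg htI.1 (fun u _ => norm_nonneg _)
    have hφmem : ∀ u ∈ Icc (0:ℝ) T₀, φ u ∈
        Metric.closedBall (0:EuclideanSpace ℝ (Fin d)) (R+1) :=
      fun u hu => hball_sub (hKball (hφK u hu))
    have hψmem : ∀ u ∈ Icc (0:ℝ) T₀, ψ u ∈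
        Metric.closedBall (0:EuclideanSpace ℝ (Fin d)) (R+1) := by
      intro u hu
      apply hball_sub
      rw [Metric.mem_closedBall, dist_zero_right]
      exact hψb u hu.1
    have hkey : ∀ t ∈ Icc (0:ℝ) T₀, ‖φ t - ψ t‖ ≤ A + L * w t := by
      intro t htI
      have hsub : φ t - ψ t = ∫ u in (0:ℝ)..t, (g u - b s (ψ u)) := by
        rw [intervalIntegral.integral_sub (hgiv t htI) (hbψiv t htI)]
        rw [hgrep t htI, hψrep t htI, hψ0']
        abel
      have hhiv : IntervalIntegrable h volume 0 t := by
        apply (hgiv t htI).sub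
        apply ContinuousOn.intervalIntegrable
        apply hbφc.mono
        rw [uIcc_of_le htI.1]
        exact Icc_subset_Icc le_rfl htI.2
      have hmono : ∀ u ∈ Icc (0:ℝ) t, ‖g u - b s (ψ u)‖ ≤ ‖h u‖ + L * ‖φ u - ψ u‖ := by
        intro u hu
        have hu' : u ∈ Icc (0:ℝ) T₀ := ⟨hu.1, hu.2.trans htI.2⟩
        have h1 : g u - b s (ψ u) = h u + (b s (φ u) - b s (ψ u)) := by
          simp only [hh_def]
          abel
        have h2 : ‖b s (φ u) - b s (ψ u)‖ ≤ L * ‖φ u - ψ u‖ :=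
          hLip s hs0 (φ u) (hφmem u hu') (ψ u) (hψmem u hu')
        calc ‖g u - b s (ψ u)‖ = ‖h u + (b s (φ u) - b s (ψ u))‖ := by rw [h1]
          _ ≤ ‖h u‖ + ‖b s (φ u) - b s (ψ u)‖ := norm_add_le _ _
          _ ≤ ‖h u‖ + L * ‖φ u - ψ u‖ := by linarith
      calc ‖φ t - ψ t‖ = ‖∫ u in (0:ℝ)..t, (g u - b s (ψ u))‖ := by rw [hsub]
        _ ≤ ∫ u in (0:ℝ)..t, ‖g u - b s (ψ u)‖ :=
            intervalIntegral.norm_integral_le_integral_norm htI.1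
        _ ≤ ∫ u in (0:ℝ)..t, (‖h u‖ + L * ‖φ u - ψ u‖) := by
            apply intervalIntegral.integral_mono_on htI.1
              ((hgiv t htI).sub (hbψiv t htI)).norm
              (hhiv.norm.add ((huiv t htI).const_mul L)) hmono
        _ = (∫ u in (0:ℝ)..t, ‖h u‖) + L * w t := by
            rw [intervalIntegral.integral_add hhiv.norm ((huiv t htI).const_mul L),
              intervalIntegral.integral_const_mul]
        _ ≤ A + L * w t := by
            have h3 : (∫ u in (0:ℝ)..t, ‖h u‖) ≤ A := by
              rw [intervalIntegral.integral_of_le htI.1, hA_def]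
              apply setIntegral_mono_set hhint.norm
                (Eventually.of_forall (fun u => norm_nonneg _))
                (HasSubset.Subset.eventuallyLE (Ioc_subset_Ioc le_rfl htI.2))
            linarith
    have hwd : ∀ t ∈ Ico (0:ℝ) T₀, HasDerivWithinAt w (‖φ t - ψ t‖) (Ici t) t := by
      intro t htt
      have hIci_mem : Icc t T₀ ∈ 𝓝[Ici t] t := by
        rw [← nhdsWithin_Icc_eq_nhdsGE htt.2]
        exact self_mem_nhdsWithin
      have hmeas : StronglyMeasurableAtFilter (fun u => ‖φ u - ψ u‖) (𝓝[Ioi t] t) volume :=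
        ⟨Icc t T₀, nhdsWithin_mono t Ioi_subset_Ici_self hIci_mem,
          ((hucont.mono (Icc_subset_Icc htt.1 le_rfl)).aestronglyMeasurable measurableSet_Icc)⟩
      have hcw : ContinuousWithinAt (fun u => ‖φ u - ψ u‖) (Ioi t) t := by
        have h1 := (hucont t ⟨htt.1, htt.2.le⟩).mono (Icc_subset_Icc htt.1 le_rfl)
        rw [ContinuousWithinAt, nhdsWithin_Icc_eq_nhdsGE htt.2] at h1
        exact h1.mono_left (nhdsWithin_mono t Ioi_subset_Ici_self)
      exact intervalIntegral.integral_hasDerivWithinAt_right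
        (huiv t ⟨htt.1, htt.2.le⟩) hmeas hcw
    have hwcont : ContinuousOn w (Icc 0 T₀) := by
      have h1 := intervalIntegral.continuousOn_primitive_interval
        (f := fun u => ‖φ u - ψ u‖) (μ := volume) (a := 0) (b := T₀)
        (by rw [uIcc_of_le hT₀pos.le]
            exact hucont.integrableOn_compact isCompact_Icc)
      rwa [uIcc_of_le hT₀pos.le] at h1
    have hw00 : w 0 = 0 := intervalIntegral.integral_same
    have hgron := norm_le_gronwallBound_of_norm_deriv_right_le (δ := 0) (K := L) (ε := A)
      hwcont hwd (by rw [hw00, norm_zero]) (fun t htt => by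
        rw [norm_norm, Real.norm_eq_abs, abs_of_nonneg (hw0 t ⟨htt.1, htt.2.le⟩)]
        have := hkey t ⟨htt.1, htt.2.le⟩
        linarith)
    have hwt : w t₁ ≤ (0 + A * T₀) * Real.exp (L * T₀) := by
      have h1 := hgron t₁ ht₁
      rw [Real.norm_eq_abs, abs_of_nonneg (hw0 t₁ ht₁)] at h1
      have h2 : gronwallBound 0 L A (t₁ - 0) ≤ (0 + A * T₀) * Real.exp (L * T₀) :=
        gronwallBound_le_aux le_rfl hL0 hA0
          (by rw [sub_zero]; exact ht₁.1) (by rw [sub_zero]; exact ht₁.2)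
      exact h1.trans h2
    have hchain : δ ≤ A * Cg := by
      have h2 : Metric.infDist (ψ t₁) K ≤ dist (ψ t₁) (φ t₁) :=
        Metric.infDist_le_dist_of_mem (hφK t₁ ht₁)
      have h3 : dist (ψ t₁) (φ t₁) = ‖φ t₁ - ψ t₁‖ := by
        rw [dist_eq_norm, norm_sub_rev]
      have h4 := hkey t₁ ht₁
      have h5 : L * w t₁ ≤ L * ((0 + A * T₀) * Real.exp (L * T₀)) :=
        mul_le_mul_of_nonneg_left hwt hL0
      have h6 : A + L * ((0 + A * T₀) * Real.exp (L * T₀)) = A * Cg := by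
        rw [hCg_def]; ring
      have hmar' : δ ≤ Metric.infDist (ψ t₁) K := hmar
      linarith
    have hAlow : δ / Cg ≤ A := by
      rw [div_le_iff₀ hCgpos]
      exact hchain
    -- pass to ℝ≥0∞
    have hmeas_h : AEMeasurable (fun u => (‖h u‖₊ : ℝ≥0∞)) (volume.restrict (Ioc (0:ℝ) T₀)) :=
      hhint.aestronglyMeasurable.enorm
    have hconj : Real.HolderConjugate 2 2 := Real.HolderConjugate.two_two
    have hholder := ENNReal.lintegral_mul_le_Lp_mul_Lq (volume.restrict (Ioc (0:ℝ) T₀)) hconj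
      hmeas_h (aemeasurable_const (b := (1:ℝ≥0∞)))
    simp only [Pi.mul_apply, mul_one, ENNReal.one_rpow, lintegral_const,
      Measure.restrict_apply_univ, Real.volume_Ioc, sub_zero, one_mul] at hholder
    set Etot : ℝ≥0∞ :=
      ∫⁻ u in Ioc (0:ℝ) T₀, ENNReal.ofReal (1/2 * ‖h u‖^2) with hEtot_def
    show ENNReal.ofReal ((δ/Cg)^2) / (2 * ENNReal.ofReal T₀) ≤ Etot
    have hsq : (∫⁻ u in Ioc (0:ℝ) T₀, (‖h u‖₊ : ℝ≥0∞) ^ (2:ℝ)) = 2 * Etot := by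
      have h2half : (2:ℝ≥0∞) * ENNReal.ofReal (1/2) = 1 := by
        rw [← ENNReal.ofReal_ofNat 2, ← ENNReal.ofReal_mul (by norm_num : (0:ℝ) ≤ 2)]
        norm_num
      have hpt : ∀ u : ℝ, (‖h u‖₊ : ℝ≥0∞) ^ (2:ℝ) = ENNReal.ofReal (‖h u‖^2) := by
        intro u
        have e1 : ((‖h u‖₊:ℝ≥0∞)) ^ (2:ℝ) = (‖h u‖₊:ℝ≥0∞) ^ (2:ℕ) := by
          rw [← ENNReal.rpow_natCast]; norm_num
        rw [e1, ← enorm_eq_nnnorm, ← ofReal_norm, ← ENNReal.ofReal_pow (norm_nonneg _)]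
      have hpt2 : ∀ u : ℝ, (2:ℝ≥0∞) * ENNReal.ofReal (1/2 * ‖h u‖^2) =
          ENNReal.ofReal (‖h u‖^2) := by
        intro u
        rw [ENNReal.ofReal_mul (by norm_num : (0:ℝ) ≤ 1/2), ← mul_assoc, h2half, one_mul]
      calc (∫⁻ u in Ioc (0:ℝ) T₀, (‖h u‖₊ : ℝ≥0∞) ^ (2:ℝ))
          = ∫⁻ u in Ioc (0:ℝ) T₀, ENNReal.ofReal (‖h u‖^2) := lintegral_congr (fun u => hpt u)
        _ = ∫⁻ u in Ioc (0:ℝ) T₀, (2:ℝ≥0∞) * ENNReal.ofReal (1/2 * ‖h u‖^2) :=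
            (lintegral_congr (fun u => hpt2 u)).symm
        _ = 2 * Etot := by rw [lintegral_const_mul' 2 _ (by simp), hEtot_def]
    have hofA : ENNReal.ofReal A = ∫⁻ u in Ioc (0:ℝ) T₀, (‖h u‖₊ : ℝ≥0∞) :=
      ofReal_integral_norm_eq_lintegral_enorm hhint
    have hstep2 : ENNReal.ofReal (δ/Cg) ≤ ((2 * Etot) * ENNReal.ofReal T₀) ^ (1/2:ℝ) := by
      calc ENNReal.ofReal (δ/Cg) ≤ ENNReal.ofReal A := ENNReal.ofReal_le_ofReal hAlow
        _ = ∫⁻ u in Ioc (0:ℝ) T₀, (‖h u‖₊ : ℝ≥0∞) := hofA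
        _ ≤ (∫⁻ u in Ioc (0:ℝ) T₀, (‖h u‖₊:ℝ≥0∞)^(2:ℝ))^(1/2:ℝ) *
              (ENNReal.ofReal T₀)^(1/2:ℝ) := hholder
        _ = ((2*Etot) * ENNReal.ofReal T₀)^(1/2:ℝ) := by
            rw [hsq]
            conv_rhs => rw [ENNReal.mul_rpow_of_nonneg _ _ (by norm_num : (0:ℝ) ≤ 1/2)]
    have hsq2 : ENNReal.ofReal ((δ/Cg)^2) ≤ (2*Etot) * ENNReal.ofReal T₀ := by
      have h1 := ENNReal.rpow_le_rpow hstep2 (by norm_num : (0:ℝ) ≤ 2)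
      rw [← ENNReal.rpow_mul, show (1/2:ℝ) * 2 = 1 by norm_num, ENNReal.rpow_one] at h1
      have h2 : (ENNReal.ofReal (δ/Cg))^(2:ℝ) = ENNReal.ofReal ((δ/Cg)^2) := by
        have e1 : (ENNReal.ofReal (δ/Cg))^(2:ℝ) = (ENNReal.ofReal (δ/Cg))^(2:ℕ) := by
          rw [← ENNReal.rpow_natCast]; norm_num
        rw [e1, ← ENNReal.ofReal_pow (by positivity)]
      rwa [h2] at h1
    rw [ENNReal.div_le_iff (by
        apply mul_ne_zero
        · simp
        · simp [ENNReal.ofReal_eq_zero, not_le, hT₀pos])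
      (ENNReal.mul_ne_top (by simp) ENNReal.ofReal_ne_top)]
    calc ENNReal.ofReal ((δ/Cg)^2) ≤ (2*Etot) * ENNReal.ofReal T₀ := hsq2
      _ = Etot * (2 * ENNReal.ofReal T₀) := by ring
  refine lt_of_lt_of_le ?_ (le_iInf₂ fun s hs => le_iInf₂ fun φ hφ => hcore s hs φ hφ)
  apply ENNReal.div_pos
  · simp only [ne_eq, ENNReal.ofReal_eq_zero, not_le]
    positivity
  · exact ENNReal.mul_ne_top (by simp) ENNReal.ofReal_ne_top
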